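/- Every valid triple of length r in noCarry(r) or yesCarry(r) supports at most one valid pair, and every triple in maybeCarry(r) supports at most two valid pairs, where a triple (y, c₀, c₁) supports the pair (i, c) if c = c₀·2^r + c₁ and some witness (a₀, a₁) satisfies a₀ + a₁ ≡ i (mod 2^r − 1). -/

import Mathlib

open scoped Classical

/-- `Shadow2 n m` : every bit set in `n` is also set in `m` (i.e. `n ≤₂ m`). -/
def Shadow2 (n m : ℕ) : Prop := ∀ i, n.testBit i = true → m.testBit i = true

/-- `(a₀, a₁)` is a witness for the validity of the triple `(y, c₀, c₁)` of
length `r`: `a₀, a₁ ∈ [2^r]`, `a₀ ≥₂ c₀`, `a₁ ≥₂ c₁`, and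
`a₀ + a₁ ≡ y (mod 2^r)`. -/
def IsWitness (r y c₀ c₁ a₀ a₁ : ℕ) : Prop :=
  a₀ < 2 ^ r ∧ a₁ < 2 ^ r ∧ Shadow2 c₀ a₀ ∧ Shadow2 c₁ a₁ ∧ (a₀ + a₁) % 2 ^ r = y

/-- All triples `(y, c₀, c₁) ∈ [2^r]³`. -/
def triples (r : ℕ) : Finset (ℕ × ℕ × ℕ) :=
  Finset.range (2 ^ r) ×ˢ Finset.range (2 ^ r) ×ˢ Finset.range (2 ^ r)

/-- Valid triples all of whose witnesses have `a₀ + a₁ ≤ 2^r - 1`. -/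
noncomputable def noCarry (r : ℕ) : Finset (ℕ × ℕ × ℕ) :=
  (triples r).filter (fun v =>
    (∃ a₀ a₁, IsWitness r v.1 v.2.1 v.2.2 a₀ a₁) ∧
    ∀ a₀ a₁, IsWitness r v.1 v.2.1 v.2.2 a₀ a₁ → a₀ + a₁ ≤ 2 ^ r - 1)

/-- Valid triples all of whose witnesses have `a₀ + a₁ > 2^r - 1`. -/
noncomputable def yesCarry (r : ℕ) : Finset (ℕ × ℕ × ℕ) :=
  (triples r).filter (fun v =>
    (∃ a₀ a₁, IsWitness r v.1 v.2.1 v.2.2 a₀ a₁) ∧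
    ∀ a₀ a₁, IsWitness r v.1 v.2.1 v.2.2 a₀ a₁ → 2 ^ r - 1 < a₀ + a₁)

/-- Valid triples admitting witnesses of both kinds. -/
noncomputable def maybeCarry (r : ℕ) : Finset (ℕ × ℕ × ℕ) :=
  (triples r).filter (fun v =>
    (∃ a₀ a₁, IsWitness r v.1 v.2.1 v.2.2 a₀ a₁ ∧ a₀ + a₁ ≤ 2 ^ r - 1) ∧
    (∃ a₀ a₁, IsWitness r v.1 v.2.1 v.2.2 a₀ a₁ ∧ 2 ^ r - 1 < a₀ + a₁))

/-- The triple `v = (y, c₀, c₁)` supports the pair `(i, c)` if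
`c = c₀·2^r + c₁`, `i < 2^r - 1`, and some witness `(a₀, a₁)` satisfies
`a₀ + a₁ ≡ i (mod 2^r - 1)`. -/
def Supports (r : ℕ) (v : ℕ × ℕ × ℕ) (p : ℕ × ℕ) : Prop :=
  p.2 = v.2.1 * 2 ^ r + v.2.2 ∧ p.1 < 2 ^ r - 1 ∧
  ∃ a₀ a₁, IsWitness r v.1 v.2.1 v.2.2 a₀ a₁ ∧ (a₀ + a₁) % (2 ^ r - 1) = p.1


lemma wit_sum {r y c₀ c₁ a₀ a₁ : ℕ} (h : IsWitness r y c₀ c₁ a₀ a₁) :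
    a₀ + a₁ = y ∨ a₀ + a₁ = y + 2 ^ r := by
  obtain ⟨h0, h1, _, _, hm⟩ := h
  have := Nat.div_add_mod (a₀ + a₁) (2 ^ r)
  have hd : (a₀ + a₁) / 2 ^ r < 2 := Nat.div_lt_of_lt_mul (by omega)
  have hy : (a₀ + a₁) % 2 ^ r < 2 ^ r := Nat.mod_lt _ ((by positivity))
  interval_cases h2 : (a₀ + a₁) / 2 ^ r <;> omega

/-- Every triple in `noCarry(r)` or `yesCarry(r)` supports at most one pair,
and every triple in `maybeCarry(r)` supports at most two pairs. -/
theorem supports_count (r : ℕ) (v : ℕ × ℕ × ℕ) :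
    ((v ∈ noCarry r ∨ v ∈ yesCarry r) →
      ∀ p p' : ℕ × ℕ, Supports r v p → Supports r v p' → p = p') ∧
    (v ∈ maybeCarry r →
      ∀ p₁ p₂ p₃ : ℕ × ℕ, Supports r v p₁ → Supports r v p₂ → Supports r v p₃ →
        p₁ = p₂ ∨ p₁ = p₃ ∨ p₂ = p₃) := by
  obtain ⟨y, c₀, c₁⟩ := v
  constructor
  · rintro (hv | hv) p p' ⟨h2, hlt, a₀, a₁, hw, hmod⟩ ⟨h2', hlt', a₀', a₁', hw', hmod'⟩ <;>
    · simp only [noCarry, yesCarry, triples, Finset.mem_filter, Finset.mem_product,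
        Finset.mem_range] at hv
      obtain ⟨⟨hy, _, _⟩, _, hall⟩ := hv
      have e1 := hall _ _ hw
      have e2 := hall _ _ hw'
      have s1 := wit_sum hw
      have s2 := wit_sum hw'
      have heq : a₀ + a₁ = a₀' + a₁' := by omega
      exact Prod.ext (by rw [← hmod, ← hmod', heq]) (by rw [h2, h2'])
  · rintro hv p₁ p₂ p₃ ⟨h2a, hlta, a₀, a₁, hwa, hma⟩ ⟨h2b, hltb, b₀, b₁, hwb, hmb⟩
      ⟨h2c, hltc, d₀, d₁, hwc, hmc⟩
    simp only [maybeCarry, triples, Finset.mem_filter, Finset.mem_product,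
      Finset.mem_range] at hv
    obtain ⟨⟨hy, _, _⟩, _⟩ := hv
    have sa := wit_sum hwa
    have sb := wit_sum hwb
    have sc := wit_sum hwc
    set m := 2 ^ r - 1 with hm
    have ha : p₁.1 = y % m ∨ p₁.1 = (y + 2 ^ r) % m := by
      rcases sa with h | h <;> [left; right] <;> rw [← hma, h]
    have hb : p₂.1 = y % m ∨ p₂.1 = (y + 2 ^ r) % m := by
      rcases sb with h | h <;> [left; right] <;> rw [← hmb, h]
    have hc : p₃.1 = y % m ∨ p₃.1 = (y + 2 ^ r) % m := by
      rcases sc with h | h <;> [left; right] <;> rw [← hmc, h]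
    have h23 : p₂.2 = p₃.2 := by rw [h2b, h2c]
    have h12 : p₁.2 = p₂.2 := by rw [h2a, h2b]
    rcases ha with ha | ha <;> rcases hb with hb | hb <;> rcases hc with hc | hc
    · exact Or.inl (Prod.ext (by omega) h12)
    · exact Or.inl (Prod.ext (by omega) h12)
    · exact Or.inr (Or.inl (Prod.ext (by omega) (by rw [h2a, h2c])))
    · exact Or.inr (Or.inr (Prod.ext (by omega) h23))
    · exact Or.inr (Or.inr (Prod.ext (by omega) h23))
    · exact Or.inr (Or.inl (Prod.ext (by omega) (by rw [h2a, h2c])))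
    · exact Or.inl (Prod.ext (by omega) h12)
    · exact Or.inl (Prod.ext (by omega) h12)
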